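/- Let k, ℓ, n be integers with k ≥ 1, ℓ ≥ 1, n ≥ 3, n > k and n > ℓ. Then the loops t ↦ blockdiag(exp(ktJ), exp((n−k)tJ)) and t ↦ blockdiag(exp(ℓtJ), exp((n−ℓ)tJ)), t ∈ [0,2π], are homotopic through positive loops in Sp(4) based at the identity. -/

import Mathlib

open Matrix Set Real

attribute [local instance] Matrix.normedAddCommGroup Matrix.normedSpace

/-- The standard complex structure on `ℝ²`. -/
def J2 : Matrix (Fin 2) (Fin 2) ℝ := !![0, -1; 1, 0]

/-- The block-diagonal complex structure `J₄ = diag(J, J)` on `ℝ⁴`. -/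
def J4 : Matrix (Fin 2 ⊕ Fin 2) (Fin 2 ⊕ Fin 2) ℝ := Matrix.fromBlocks J2 0 0 J2

/-- The 4×4 block-diagonal matrix with 2×2 diagonal blocks `X` and `Y`. -/
def blockDiag2 (X Y : Matrix (Fin 2) (Fin 2) ℝ) :
    Matrix (Fin 2 ⊕ Fin 2) (Fin 2 ⊕ Fin 2) ℝ :=
  Matrix.fromBlocks X 0 0 Y

/-- A positive path in `Sp(4)` (taken w.r.t. `J₄ = diag(J, J)`) on the parameter set
`s`. -/
def IsPosPathJ4 (s : Set ℝ) (A : ℝ → Matrix (Fin 2 ⊕ Fin 2) (Fin 2 ⊕ Fin 2) ℝ) : Prop :=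
  ∀ t ∈ s, (A t)ᵀ * J4 * A t = J4 ∧
    ∃ P : Matrix (Fin 2 ⊕ Fin 2) (Fin 2 ⊕ Fin 2) ℝ, P.IsSymm ∧ P.PosDef ∧
      HasDerivWithinAt A (J4 * P * A t) s t

/-- A positive loop in `Sp(4)` (w.r.t. `J₄ = diag(J, J)`) based at `K`. -/
noncomputable def PosLoopJ4 (K : Matrix (Fin 2 ⊕ Fin 2) (Fin 2 ⊕ Fin 2) ℝ)
    (A : ℝ → Matrix (Fin 2 ⊕ Fin 2) (Fin 2 ⊕ Fin 2) ℝ) : Prop :=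
  IsPosPathJ4 (Icc 0 (2 * π)) A ∧ A 0 = K ∧ A (2 * π) = K

/-- Two loops in `Sp(4)` (w.r.t. `J₄ = diag(J, J)`) based at `K` are homotopic through
positive loops based at `K`. -/
noncomputable def PosHomotopicJ4 (K : Matrix (Fin 2 ⊕ Fin 2) (Fin 2 ⊕ Fin 2) ℝ)
    (A B : ℝ → Matrix (Fin 2 ⊕ Fin 2) (Fin 2 ⊕ Fin 2) ℝ) : Prop :=
  ∃ H : ℝ → ℝ → Matrix (Fin 2 ⊕ Fin 2) (Fin 2 ⊕ Fin 2) ℝ,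
    ContinuousOn (fun p : ℝ × ℝ => H p.1 p.2) (Icc 0 1 ×ˢ Icc 0 (2 * π)) ∧
    (∀ t ∈ Icc (0 : ℝ) (2 * π), H 0 t = A t ∧ H 1 t = B t) ∧
    (∀ s ∈ Icc (0 : ℝ) 1, H s 0 = K ∧ H s (2 * π) = K) ∧
    (∀ s ∈ Icc (0 : ℝ) 1, IsPosPathJ4 (Icc 0 (2 * π)) (H s))

section Aux
set_option linter.unusedTactic false
set_option linter.unreachableTactic false
set_option linter.unnecessarySimpa false
set_option linter.unnecessarySeqFocus false

lemma J2_sq : J2 * J2 = -1 := by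
  ext i j; fin_cases i <;> fin_cases j <;> simp [J2, Matrix.mul_apply, Fin.sum_univ_two]

noncomputable def phi : ℂ →ₐ[ℝ] Matrix (Fin 2) (Fin 2) ℝ := Complex.liftAux J2 J2_sq

lemma phi_apply (z : ℂ) : phi z = z.re • (1 : Matrix (Fin 2) (Fin 2) ℝ) + z.im • J2 := by
  rw [phi, Complex.liftAux_apply, Algebra.algebraMap_eq_smul_one]

lemma phi_cont : Continuous phi := by
  have : (phi : ℂ → Matrix (Fin 2) (Fin 2) ℝ) = fun z => z.re • 1 + z.im • J2 := funext phi_apply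
  rw [this]; fun_prop

lemma exp_phi (w : ℂ) : NormedSpace.exp (phi w) = phi (NormedSpace.exp w) := by
  have hsum : Summable fun n : ℕ => ((Nat.factorial n : ℝ)⁻¹) • w ^ n :=
    NormedSpace.expSeries_summable' w
  have h1 : NormedSpace.exp (phi w) = ∑' n : ℕ, ((Nat.factorial n : ℝ)⁻¹) • (phi w) ^ n := by
    rw [NormedSpace.exp_eq_tsum ℝ]
  rw [h1, NormedSpace.exp_eq_tsum ℝ]
  have h2 : ∀ n : ℕ, ((Nat.factorial n : ℝ)⁻¹) • (phi w) ^ n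
      = phi (((Nat.factorial n : ℝ)⁻¹) • w ^ n) := by
    intro n; rw [_root_.map_smul, map_pow]
  simp only [h2]
  have := ((hsum.hasSum.map (phi.toLinearMap.toAddMonoidHom) phi_cont).tsum_eq).symm
  exact this.symm

lemma exp_theta_J2 (θ : ℝ) :
    NormedSpace.exp (θ • J2) = Real.cos θ • (1 : Matrix (Fin 2) (Fin 2) ℝ) + Real.sin θ • J2 := by
  have h1 : θ • J2 = phi ((θ:ℂ) * Complex.I) := by rw [phi_apply]; simp
  rw [h1, exp_phi, ← Complex.exp_eq_exp_ℂ,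
    Complex.exp_mul_I, phi_apply]
  simp [Complex.cos_ofReal_re, Complex.sin_ofReal_re]

noncomputable def Rot (θ : ℝ) : Matrix (Fin 2) (Fin 2) ℝ := !![cos θ, -sin θ; sin θ, cos θ]

lemma Rot_zero : Rot 0 = 1 := by
  ext i j; fin_cases i <;> fin_cases j <;> simp [Rot]

lemma Rot_add (a b : ℝ) : Rot (a + b) = Rot a * Rot b := by
  ext i j; fin_cases i <;> fin_cases j <;>
    simp [Rot, Matrix.mul_apply, Fin.sum_univ_two, cos_add, sin_add] <;> ring

lemma Rot_transpose (θ : ℝ) : (Rot θ)ᵀ = Rot (-θ) := by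
  ext i j; fin_cases i <;> fin_cases j <;> simp [Rot]

lemma Rot_mul_Rot_neg (θ : ℝ) : Rot θ * Rot (-θ) = 1 := by
  rw [← Rot_add]; simp [Rot_zero]

lemma J2_mul_Rot (θ : ℝ) : J2 * Rot θ = !![-sin θ, -cos θ; cos θ, -sin θ] := by
  ext i j; fin_cases i <;> fin_cases j <;>
    simp [Rot, J2, Matrix.mul_apply, Fin.sum_univ_two]

lemma Rot_comm_J2 (θ : ℝ) : Rot θ * J2 = J2 * Rot θ := by
  ext i j; fin_cases i <;> fin_cases j <;>
    simp [Rot, J2, Matrix.mul_apply, Fin.sum_univ_two]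

lemma Rot_int (m : ℤ) : Rot (m * (2 * π)) = 1 := by
  have h1 : cos ((m:ℝ) * (2*π)) = 1 := by simpa using Real.cos_add_int_mul_two_pi 0 m
  have h2 : sin ((m:ℝ) * (2*π)) = 0 := by simpa using Real.sin_add_int_mul_two_pi 0 m
  ext i j; fin_cases i <;> fin_cases j <;> simp [Rot, h1, h2]

lemma smul_one_add_smul_J2 (a b : ℝ) :
    a • (1 : Matrix (Fin 2) (Fin 2) ℝ) + b • J2 = !![a, -b; b, a] := by
  ext i j; fin_cases i <;> fin_cases j <;> simp [J2]

-- derivative of Rot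
lemma hasDerivAt_Rot (c θ : ℝ) :
    HasDerivAt (fun θ : ℝ => Rot (c * θ)) (c • (J2 * Rot (c * θ))) θ := by
  have h : ∀ θ, c • (J2 * Rot (c * θ)) = !![c * -sin (c*θ), c * -cos (c*θ); c * cos (c*θ), c * -sin (c*θ)] := by
    intro θ; rw [J2_mul_Rot]; ext i j; fin_cases i <;> fin_cases j <;> simp
  rw [h]
  apply hasDerivAt_pi.2; intro i
  apply hasDerivAt_pi.2; intro j
  have hc : HasDerivAt (fun θ : ℝ => c * θ) c θ := by
    simpa using (hasDerivAt_id θ).const_mul c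
  fin_cases i <;> fin_cases j <;>
    simp only [Rot, Matrix.cons_val', Matrix.cons_val_zero, Matrix.cons_val_one, Matrix.head_cons,
      Matrix.empty_val', Matrix.cons_val_fin_one, Matrix.head_fin_const] <;>
  · first
    | exact (hc.cos.congr_deriv (by simp; try ring))
    | exact (hc.sin.congr_deriv (by simp; try ring))
    | exact ((hc.sin).neg.congr_deriv (by simp; try ring))
    | exact ((hc.cos).neg.congr_deriv (by simp; try ring))

abbrev M2 := Matrix (Fin 2) (Fin 2) ℝ
abbrev M4 := Matrix (Fin 2 ⊕ Fin 2) (Fin 2 ⊕ Fin 2) ℝ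


noncomputable def C4 (s : ℝ) : M4 := fromBlocks (cos s • 1) (-sin s • 1) (sin s • 1) (cos s • 1)
noncomputable def F4 (t : ℝ) : M4 := fromBlocks (Rot t) 0 0 1
noncomputable def Lp (a b : ℝ) (t : ℝ) : M4 := fromBlocks (Rot (a*t)) 0 0 (Rot (b*t))
def P0 : M4 := fromBlocks 1 0 0 0
noncomputable def Qm (a b : ℝ) : M4 := fromBlocks (a • 1) 0 0 (b • 1)

lemma smul_one_mul_comm (r : ℝ) (A : M2) : (r • (1:M2)) * A = A * (r • 1) := by
  simp [Matrix.smul_mul, Matrix.mul_smul]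

lemma C4_mul (s s' : ℝ) : C4 s * C4 s' = C4 (s + s') := by
  simp only [C4, fromBlocks_multiply]
  congr 1 <;>
  · simp only [Matrix.smul_mul, Matrix.mul_smul, Matrix.one_mul, Matrix.mul_one, smul_smul,
      cos_add, sin_add, ← neg_smul, ← add_smul, neg_neg, neg_mul, mul_neg, neg_add,smul_neg]
    congr 1
    ring
lemma C4_zero : C4 0 = 1 := by simp [C4, fromBlocks_one]
lemma C4_transpose (s : ℝ) : (C4 s)ᵀ = C4 (-s) := by
  simp [C4, fromBlocks_transpose, Matrix.transpose_smul]
lemma C4_inv (s : ℝ) : C4 s * C4 (-s) = 1 := by rw [C4_mul]; simp [C4_zero]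
lemma C4_comm_J4 (s : ℝ) : C4 s * J4 = J4 * C4 s := by
  simp only [C4, J4, fromBlocks_multiply]
  simp [Matrix.smul_mul, Matrix.mul_smul]

lemma F4_comm_J4 (t : ℝ) : F4 t * J4 = J4 * F4 t := by
  simp only [F4, J4, fromBlocks_multiply]
  simp [Rot_comm_J2]
lemma F4_transpose (t : ℝ) : (F4 t)ᵀ = F4 (-t) := by
  simp [F4, fromBlocks_transpose, Rot_transpose]
lemma F4_mul (t t' : ℝ) : F4 t * F4 t' = F4 (t + t') := by
  simp [F4, fromBlocks_multiply, Rot_add]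
lemma F4_zero : F4 0 = 1 := by simp [F4, Rot_zero, fromBlocks_one]
lemma F4_inv (t : ℝ) : F4 t * F4 (-t) = 1 := by rw [F4_mul]; simp [F4_zero]

lemma Lp_comm_J4 (a b t : ℝ) : Lp a b t * J4 = J4 * Lp a b t := by
  simp only [Lp, J4, fromBlocks_multiply]; simp [Rot_comm_J2]
lemma Lp_transpose (a b t : ℝ) : (Lp a b t)ᵀ = Lp a b (-t) := by
  simp [Lp, fromBlocks_transpose, Rot_transpose, mul_neg]
lemma Lp_zero (a b : ℝ) : Lp a b 0 = 1 := by simp [Lp, Rot_zero, fromBlocks_one]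
lemma Lp_inv (a b t : ℝ) : Lp a b t * Lp a b (-t) = 1 := by
  simp [Lp, fromBlocks_multiply, ← Rot_add, mul_neg, Rot_zero, fromBlocks_one]

-- matrix-valued calculus helpers
lemma hasDerivAt_matrix {m n : Type*} [Fintype m] [Fintype n] {f : ℝ → Matrix m n ℝ}
    {f' : Matrix m n ℝ} {x : ℝ} :
    HasDerivAt f f' x ↔ ∀ i j, HasDerivAt (fun t => f t i j) (f' i j) x := by
  constructor
  · intro h i j
    exact (hasDerivAt_pi.1 ((hasDerivAt_pi.1 h) i)) j
  · intro h
    exact hasDerivAt_pi.2 fun i => hasDerivAt_pi.2 fun j => h i j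

lemma HasDerivAt.matmul {n : Type*} [Fintype n] [DecidableEq n] {f g : ℝ → Matrix n n ℝ}
    {f' g' : Matrix n n ℝ} {x : ℝ} (hf : HasDerivAt f f' x) (hg : HasDerivAt g g' x) :
    HasDerivAt (fun t => f t * g t) (f' * g x + f x * g') x := by
  rw [hasDerivAt_matrix] at hf hg ⊢
  intro i j
  simp only [Matrix.mul_apply, Matrix.add_apply]
  rw [← Finset.sum_add_distrib]
  apply HasDerivAt.fun_sum
  intro k _
  exact ((hf i k).mul (hg k j)).congr_deriv (by ring)

lemma hasDerivAt_fromBlocks {f₁ f₂ f₃ f₄ : ℝ → M2} {f₁' f₂' f₃' f₄' : M2} {x : ℝ}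
    (h1 : HasDerivAt f₁ f₁' x) (h2 : HasDerivAt f₂ f₂' x)
    (h3 : HasDerivAt f₃ f₃' x) (h4 : HasDerivAt f₄ f₄' x) :
    HasDerivAt (fun t => fromBlocks (f₁ t) (f₂ t) (f₃ t) (f₄ t))
      (fromBlocks f₁' f₂' f₃' f₄' : M4) x := by
  rw [hasDerivAt_matrix]
  rw [hasDerivAt_matrix] at h1 h2 h3 h4
  rintro (i | i) (j | j) <;> simpa [fromBlocks] using by first
    | exact h1 i j | exact h2 i j | exact h3 i j | exact h4 i j

lemma hasDerivAt_F4 (t : ℝ) : HasDerivAt F4 (J4 * P0 * F4 t) t := by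
  have h := hasDerivAt_Rot 1 t
  simp only [one_mul, one_smul] at h
  have : J4 * P0 * F4 t = fromBlocks (J2 * Rot t) 0 0 0 := by
    simp [J4, P0, F4, fromBlocks_multiply]
  rw [this]
  exact hasDerivAt_fromBlocks (by simpa using h) (hasDerivAt_const _ _)
    (hasDerivAt_const _ _) (hasDerivAt_const _ _)

lemma hasDerivAt_Lp (a b t : ℝ) : HasDerivAt (Lp a b) (J4 * Qm a b * Lp a b t) t := by
  have ha := hasDerivAt_Rot a t
  have hb := hasDerivAt_Rot b t
  have : J4 * Qm a b * Lp a b t = fromBlocks (a • (J2 * Rot (a*t))) 0 0 (b • (J2 * Rot (b*t))) := by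
    simp [J4, Qm, Lp, fromBlocks_multiply, Matrix.mul_smul, Matrix.smul_mul]
  rw [this]
  exact hasDerivAt_fromBlocks ha (hasDerivAt_const _ _) (hasDerivAt_const _ _) hb

-- continuity
lemma continuous_Rot : Continuous Rot := by
  apply continuous_matrix; intro i j
  fin_cases i <;> fin_cases j <;>
    · simp [Rot]
      fun_prop

lemma continuous_C4 : Continuous C4 := by
  apply Continuous.matrix_fromBlocks <;> fun_prop

lemma continuous_F4 : Continuous F4 := by
  apply Continuous.matrix_fromBlocks <;> first
    | exact continuous_Rot | exact continuous_const

lemma continuous_Lp (a b : ℝ) : Continuous (fun t => Lp a b t) := by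
  apply Continuous.matrix_fromBlocks <;> first
    | exact continuous_Rot.comp (by fun_prop) | exact continuous_const

-- positivity
lemma Qm_eq_diagonal (a b : ℝ) :
    Qm a b = Matrix.diagonal (Sum.elim (fun _ => a) (fun _ => b)) := by
  ext i j
  rcases i with i | i <;> rcases j with j | j <;>
    by_cases h : i = j <;>
    simp [Qm, fromBlocks, Matrix.diagonal, Matrix.one_apply, h]

lemma Qm_posDef {a b : ℝ} (ha : 0 < a) (hb : 0 < b) : (Qm a b).PosDef := by
  rw [Qm_eq_diagonal]
  exact posDef_diagonal_iff.mpr (by rintro (i | i) <;> assumption)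

lemma P0_posSemidef : P0.PosSemidef := by
  have : P0 = Matrix.diagonal (Sum.elim (fun _ => (1:ℝ)) (fun _ => 0)) := by
    ext i j
    rcases i with i | i <;> rcases j with j | j <;>
      by_cases h : i = j <;>
      simp [P0, fromBlocks, Matrix.diagonal, Matrix.one_apply, h]
  rw [this]
  exact PosSemidef.diagonal (by rintro (i | i) <;> norm_num)

lemma posSemidef_conj {P M : M4} (hP : P.PosSemidef) : (M * P * Mᵀ).PosSemidef := by
  simpa [conjTranspose_eq_transpose_of_trivial] using hP.mul_mul_conjTranspose_same M

lemma star_triv (x : Fin 2 ⊕ Fin 2 → ℝ) : star x = x := by simp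

lemma posDef_conj {P M : M4} (hP : P.PosDef) (hM : M * Mᵀ = 1) : (M * P * Mᵀ).PosDef := by
  have hinj : Function.Injective M.vecMul := fun x y h => by
    have := congrArg (· ᵥ* Mᵀ) h
    simpa [vecMul_vecMul, hM] using this
  simpa [conjTranspose_eq_transpose_of_trivial] using hP.mul_mul_conjTranspose_same hinj

lemma symm_conj {S M : M4} (hS : Sᵀ = S) : (M * S * Mᵀ)ᵀ = M * S * Mᵀ := by
  rw [Matrix.transpose_mul, Matrix.transpose_mul, transpose_transpose, hS, Matrix.mul_assoc]

lemma sympl_of {G : M4} (h1 : Gᵀ * G = 1) (h2 : G * J4 = J4 * G) : Gᵀ * J4 * G = J4 := by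
  rw [Matrix.mul_assoc, ← h2, ← Matrix.mul_assoc, h1, Matrix.one_mul]

-- orthogonality
lemma C4_orth (s : ℝ) : (C4 s)ᵀ * C4 s = 1 := by
  rw [C4_transpose]; rw [show (-s) = -s from rfl]
  have := C4_inv (-s); rwa [neg_neg] at this
lemma F4_orth (t : ℝ) : (F4 t)ᵀ * F4 t = 1 := by
  rw [F4_transpose]; have := F4_inv (-t); rwa [neg_neg] at this
lemma Lp_orth (a b t : ℝ) : (Lp a b t)ᵀ * Lp a b t = 1 := by
  rw [Lp_transpose]; have := Lp_inv a b (-t); rwa [neg_neg] at this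

lemma orth_mul {X Y : M4} (hX : Xᵀ * X = 1) (hY : Yᵀ * Y = 1) : (X * Y)ᵀ * (X * Y) = 1 := by
  rw [Matrix.transpose_mul, Matrix.mul_assoc, ← Matrix.mul_assoc Xᵀ, hX, Matrix.one_mul, hY]

lemma mul_cancel_left {X Y : M4} (h : X * Y = 1) (Z : M4) : X * (Y * Z) = Z := by
  rw [← Matrix.mul_assoc, h, Matrix.one_mul]

lemma comm_assoc {X : M4} (h : X * J4 = J4 * X) (Y : M4) : X * (J4 * Y) = J4 * (X * Y) := by
  rw [← Matrix.mul_assoc, h, Matrix.mul_assoc]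

lemma C4_inv' (s : ℝ) : C4 (-s) * C4 s = 1 := by rw [C4_mul]; simp [C4_zero]
lemma F4_inv' (t : ℝ) : F4 (-t) * F4 t = 1 := by rw [F4_mul]; simp [F4_zero]

-- the moving frame
noncomputable def Mst (θ t : ℝ) : M4 := C4 θ * F4 t * C4 (-θ)
noncomputable def Hm (θ a b t : ℝ) : M4 := Mst θ t * Lp a b t
noncomputable def Ptot (θ a b t : ℝ) : M4 :=
  C4 θ * P0 * (C4 θ)ᵀ + Mst θ t * Qm a b * (Mst θ t)ᵀ

lemma Mst_orth (θ t : ℝ) : (Mst θ t)ᵀ * Mst θ t = 1 :=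
  orth_mul (orth_mul (C4_orth θ) (F4_orth t)) (C4_orth (-θ))

lemma Hm_orth (θ a b t : ℝ) : (Hm θ a b t)ᵀ * Hm θ a b t = 1 :=
  orth_mul (Mst_orth θ t) (Lp_orth a b t)

lemma orth_flip {X : M4} (h : Xᵀ * X = 1) : X * Xᵀ = 1 := by
  have h2 := mul_eq_one_comm.mp h
  exact h2

lemma Mst_comm_J4 (θ t : ℝ) : Mst θ t * J4 = J4 * Mst θ t := by
  unfold Mst
  simp only [Matrix.mul_assoc]
  rw [C4_comm_J4, comm_assoc (F4_comm_J4 t), comm_assoc (C4_comm_J4 θ)]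

lemma Hm_comm_J4 (θ a b t : ℝ) : Hm θ a b t * J4 = J4 * Hm θ a b t := by
  unfold Hm
  rw [Matrix.mul_assoc, Lp_comm_J4, ← Matrix.mul_assoc, Mst_comm_J4, Matrix.mul_assoc]

lemma Hm_sympl (θ a b t : ℝ) : (Hm θ a b t)ᵀ * J4 * Hm θ a b t = J4 :=
  sympl_of (Hm_orth θ a b t) (Hm_comm_J4 θ a b t)

lemma Ptot_symm (θ a b t : ℝ) : (Ptot θ a b t)ᵀ = Ptot θ a b t := by
  unfold Ptot
  rw [Matrix.transpose_add]
  congr 1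
  · have : C4 θ * P0 * (C4 θ)ᵀ = C4 θ * P0 * (C4 θ)ᵀ := rfl
    exact symm_conj (by simp [P0, fromBlocks_transpose])
  · exact symm_conj (by simp [Qm, fromBlocks_transpose])

lemma Ptot_posDef (θ : ℝ) {a b : ℝ} (ha : 0 < a) (hb : 0 < b) (t : ℝ) :
    (Ptot θ a b t).PosDef := by
  have h1 : (C4 θ * P0 * (C4 θ)ᵀ).PosSemidef := posSemidef_conj P0_posSemidef
  have h2 : (Mst θ t * Qm a b * (Mst θ t)ᵀ).PosDef :=
    posDef_conj (Qm_posDef ha hb) (orth_flip (Mst_orth θ t))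
  exact Matrix.PosDef.posSemidef_add h1 h2

-- derivative helpers
lemma HasDerivAt.const_matmul {f : ℝ → M4} {f' : M4} {x : ℝ} (c : M4)
    (hf : HasDerivAt f f' x) : HasDerivAt (fun t => c * f t) (c * f') x := by
  have := (hasDerivAt_const x c).matmul hf
  simpa using this

lemma HasDerivAt.matmul_const {f : ℝ → M4} {f' : M4} {x : ℝ} (c : M4)
    (hf : HasDerivAt f f' x) : HasDerivAt (fun t => f t * c) (f' * c) x := by
  have := hf.matmul (hasDerivAt_const x c)
  simpa using this

lemma hasDerivAt_Hm (θ a b t : ℝ) :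
    HasDerivAt (Hm θ a b) (J4 * Ptot θ a b t * Hm θ a b t) t := by
  have hF : HasDerivAt (fun t => C4 θ * F4 t * C4 (-θ) * Lp a b t)
      ((C4 θ * (J4 * P0 * F4 t) * C4 (-θ)) * Lp a b t
        + (C4 θ * F4 t * C4 (-θ)) * (J4 * Qm a b * Lp a b t)) t := by
    exact ((((hasDerivAt_F4 t).const_matmul (C4 θ)).matmul_const (C4 (-θ))).matmul
      (hasDerivAt_Lp a b t)).congr_deriv (by rw [Matrix.mul_assoc (C4 θ)])
  have heq : (C4 θ * (J4 * P0 * F4 t) * C4 (-θ)) * Lp a b t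
        + (C4 θ * F4 t * C4 (-θ)) * (J4 * Qm a b * Lp a b t)
      = J4 * Ptot θ a b t * Hm θ a b t := by
    unfold Ptot Hm Mst
    rw [C4_transpose, Matrix.transpose_mul, Matrix.transpose_mul, C4_transpose, C4_transpose,
      F4_transpose, neg_neg]
    rw [Matrix.mul_add, Matrix.add_mul]
    congr 1
    · simp only [Matrix.mul_assoc]
      rw [mul_cancel_left (C4_inv' θ)]
      rw [comm_assoc (C4_comm_J4 θ)]
    · simp only [Matrix.mul_assoc]
      rw [mul_cancel_left (C4_inv' θ), mul_cancel_left (F4_inv' t), mul_cancel_left (C4_inv θ)]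
      rw [comm_assoc (C4_comm_J4 (-θ)), comm_assoc (F4_comm_J4 t), comm_assoc (C4_comm_J4 θ)]
  have hfun : Hm θ a b = fun t => C4 θ * F4 t * C4 (-θ) * Lp a b t := by
    funext t; unfold Hm Mst; rfl
  rw [hfun]
  exact hF.congr_deriv heq

lemma F4_two_pi : F4 (2 * π) = 1 := by
  have := Rot_int 1
  rw [Int.cast_one, one_mul] at this
  simp [F4, this, fromBlocks_one]

lemma Lp_two_pi (a b : ℤ) : Lp a b (2 * π) = 1 := by
  simp [Lp, Rot_int, fromBlocks_one]

lemma Hm_zero (θ a b : ℝ) : Hm θ a b 0 = 1 := by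
  unfold Hm Mst
  rw [F4_zero, Matrix.mul_one, C4_inv, Lp_zero, Matrix.one_mul]

lemma Hm_two_pi (θ : ℝ) (a b : ℤ) : Hm θ (a:ℝ) (b:ℝ) (2 * π) = 1 := by
  unfold Hm Mst
  rw [F4_two_pi, Matrix.mul_one, C4_inv, Lp_two_pi, Matrix.one_mul]

lemma Hm_theta_zero (a b t : ℝ) : Hm 0 a b t = Lp (a+1) b t := by
  unfold Hm Mst
  rw [C4_zero, Matrix.one_mul, neg_zero, C4_zero, Matrix.mul_one]
  simp only [F4, Lp, fromBlocks_multiply]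
  simp [← Rot_add]
  ring_nf

lemma C4_pi2 : C4 (π/2) = fromBlocks 0 (-1) 1 0 := by
  simp [C4, Real.cos_pi_div_two, Real.sin_pi_div_two]

lemma C4_neg_pi2 : C4 (-(π/2)) = fromBlocks 0 1 (-1) 0 := by
  simp [C4, Real.cos_pi_div_two, Real.sin_pi_div_two]

lemma Hm_theta_pi2 (a b t : ℝ) : Hm (π/2) a b t = Lp a (b+1) t := by
  unfold Hm Mst
  rw [C4_pi2, C4_neg_pi2]
  simp only [F4, Lp, fromBlocks_multiply]
  simp [← Rot_add]
  ring_nf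

lemma isPosPath_Hm {a b : ℝ} (ha : 0 < a) (hb : 0 < b) (θ : ℝ) (s : Set ℝ) :
    IsPosPathJ4 s (Hm θ a b) := by
  intro t _
  refine ⟨Hm_sympl θ a b t, Ptot θ a b t, Ptot_symm θ a b t, Ptot_posDef θ ha hb t,
    (hasDerivAt_Hm θ a b t).hasDerivWithinAt⟩

lemma isPosPath_Lp {a b : ℝ} (ha : 0 < a) (hb : 0 < b) (s : Set ℝ) :
    IsPosPathJ4 s (Lp a b) := by
  intro t _
  refine ⟨sympl_of (Lp_orth a b t) (Lp_comm_J4 a b t), Qm a b, ?_, Qm_posDef ha hb,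
    (hasDerivAt_Lp a b t).hasDerivWithinAt⟩
  show (Qm a b)ᵀ = Qm a b
  simp [Qm, fromBlocks_transpose]

lemma continuous_Hm2 (a b : ℝ) : Continuous (fun p : ℝ × ℝ => Hm (p.1 * (π/2)) a b p.2) := by
  unfold Hm Mst
  exact (((continuous_C4.comp (by fun_prop)).matrix_mul
    (continuous_F4.comp continuous_snd)).matrix_mul
    (continuous_C4.comp (by fun_prop))).matrix_mul ((continuous_Lp a b).comp continuous_snd)

-- the elementary move
lemma move (a b : ℤ) (ha : 1 ≤ a) (hb : 1 ≤ b) :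
    PosHomotopicJ4 1 (Lp ((a:ℝ)+1) b) (Lp a ((b:ℝ)+1)) := by
  have ha' : (0:ℝ) < a := by exact_mod_cast ha
  have hb' : (0:ℝ) < b := by exact_mod_cast hb
  refine ⟨fun s t => Hm (s * (π/2)) a b t, ?_, ?_, ?_, ?_⟩
  · exact (continuous_Hm2 a b).continuousOn
  · intro t _
    constructor
    · show Hm ((0:ℝ) * (π/2)) _ _ _ = _
      rw [show (0:ℝ) * (π/2) = 0 by ring, Hm_theta_zero]
    · show Hm ((1:ℝ) * (π/2)) _ _ _ = _
      rw [show (1:ℝ) * (π/2) = π/2 by ring, Hm_theta_pi2]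
  · intro s _
    exact ⟨Hm_zero _ a b, Hm_two_pi _ a b⟩
  · intro s _
    exact isPosPath_Hm ha' hb' _ _

-- plumbing
lemma posHomotopic_congr {K A B A' B'} (hA : A = A') (hB : B = B')
    (h : PosHomotopicJ4 K A B) : PosHomotopicJ4 K A' B' := hA ▸ hB ▸ h

lemma posHomotopic_refl {a b : ℤ} (ha : 1 ≤ a) (hb : 1 ≤ b) :
    PosHomotopicJ4 1 (Lp a b) (Lp a b) := by
  have ha' : (0:ℝ) < a := by exact_mod_cast ha
  have hb' : (0:ℝ) < b := by exact_mod_cast hb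
  refine ⟨fun _ t => Lp a b t, ?_, fun t _ => ⟨rfl, rfl⟩,
    fun s _ => ⟨Lp_zero _ _, Lp_two_pi a b⟩, fun s _ => isPosPath_Lp ha' hb' _⟩
  exact ((continuous_Lp _ _).comp continuous_snd).continuousOn

lemma posHomotopic_symm {A B} (h : PosHomotopicJ4 1 A B) : PosHomotopicJ4 1 B A := by
  obtain ⟨H, hc, he, hk, hp⟩ := h
  refine ⟨fun s t => H (1 - s) t, ?_, ?_, ?_, ?_⟩
  · have : (fun p : ℝ × ℝ => H (1 - p.1) p.2)
        = (fun p : ℝ × ℝ => H p.1 p.2) ∘ (fun p : ℝ × ℝ => (1 - p.1, p.2)) := rfl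
    rw [this]
    apply hc.comp (Continuous.continuousOn (by fun_prop))
    rintro ⟨s, t⟩ ⟨hs, ht⟩
    exact ⟨⟨by simp [hs.2], by simp [hs.1]⟩, ht⟩
  · intro t ht
    refine ⟨by simpa using (he t ht).2, by simpa using (he t ht).1⟩
  · intro s hs
    exact hk (1 - s) ⟨by simp [hs.2], by simp [hs.1]⟩
  · intro s hs
    exact hp (1 - s) ⟨by simp [hs.2], by simp [hs.1]⟩

open Classical in
lemma posHomotopic_trans {A B C} (h1 : PosHomotopicJ4 1 A B) (h2 : PosHomotopicJ4 1 B C) :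
    PosHomotopicJ4 1 A C := by
  obtain ⟨H1, hc1, he1, hk1, hp1⟩ := h1
  obtain ⟨H2, hc2, he2, hk2, hp2⟩ := h2
  refine ⟨fun s t => if s ≤ 1/2 then H1 (2*s) t else H2 (2*s - 1) t, ?_, ?_, ?_, ?_⟩
  · apply ContinuousOn.if
    · rintro ⟨s, t⟩ ⟨⟨hs, ht⟩, hf⟩
      have hfr : s = 1/2 := by
        have h := frontier_le_subset_eq (f := fun p : ℝ × ℝ => p.1) (g := fun _ => (1:ℝ)/2)
          continuous_fst continuous_const
        have := h hf
        simpa using this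
      subst hfr
      have hb : H1 (2 * (1/2 : ℝ)) t = H2 (2 * (1/2 : ℝ) - 1) t := by
        norm_num
        rw [(he1 t ht).2, (he2 t ht).1]
      exact hb
    · -- continuity of first piece
      have : ContinuousOn ((fun p : ℝ × ℝ => H1 p.1 p.2) ∘ (fun p : ℝ × ℝ => (2 * p.1, p.2)))
          ((Icc 0 1 ×ˢ Icc 0 (2*π)) ∩ {p : ℝ × ℝ | p.1 ≤ 1/2}) := by
        apply hc1.comp (Continuous.continuousOn (by fun_prop))
        rintro ⟨s, t⟩ ⟨⟨hs, ht⟩, hle⟩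
        simp only [mem_setOf_eq] at hle
        simp only [mem_Icc] at hs
        have h1 : (2*s) ∈ Icc (0:ℝ) 1 := by
          simp only [mem_Icc]; constructor <;> linarith [hs.1, hs.2]
        exact ⟨h1, ht⟩
      exact this.mono (by
        intro p hp
        rcases hp with ⟨hp1', hp2'⟩
        refine ⟨hp1', ?_⟩
        have : IsClosed {p : ℝ × ℝ | p.1 ≤ 1/2} := isClosed_le continuous_fst continuous_const
        exact this.closure_subset hp2')
    · have : ContinuousOn ((fun p : ℝ × ℝ => H2 p.1 p.2) ∘ (fun p : ℝ × ℝ => (2 * p.1 - 1, p.2)))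
          ((Icc 0 1 ×ˢ Icc 0 (2*π)) ∩ {p : ℝ × ℝ | 1/2 ≤ p.1}) := by
        apply hc2.comp (Continuous.continuousOn (by fun_prop))
        rintro ⟨s, t⟩ ⟨⟨hs, ht⟩, hle⟩
        simp only [mem_setOf_eq] at hle
        simp only [mem_Icc] at hs
        have h1 : (2*s - 1) ∈ Icc (0:ℝ) 1 := by
          simp only [mem_Icc]; constructor <;> linarith [hs.1, hs.2]
        exact ⟨h1, ht⟩
      apply this.mono
      intro p hp
      rcases hp with ⟨hp1', hp2'⟩
      refine ⟨hp1', ?_⟩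
      have hcl : closure {p : ℝ × ℝ | ¬ p.1 ≤ 1/2} ⊆ {p : ℝ × ℝ | 1/2 ≤ p.1} := by
        have : {p : ℝ × ℝ | ¬ p.1 ≤ 1/2} ⊆ {p : ℝ × ℝ | 1/2 ≤ p.1} := by
          intro q hq; simp only [mem_setOf_eq] at hq ⊢; linarith [lt_of_not_ge hq]
        exact closure_minimal this (isClosed_le continuous_const continuous_fst)
      exact hcl hp2'
  · intro t ht
    constructor
    · beta_reduce
      rw [if_pos (by norm_num)]
      simpa using (he1 t ht).1
    · beta_reduce
      rw [if_neg (by norm_num)]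
      norm_num
      exact (he2 t ht).2
  · intro s hs
    by_cases h : s ≤ 1/2
    · beta_reduce
      simp only [if_pos h]
      exact hk1 (2*s) ⟨by linarith [hs.1], by linarith⟩
    · beta_reduce
      simp only [if_neg h]
      exact hk2 (2*s - 1) ⟨by simp at h ⊢; linarith, by linarith [hs.2]⟩
  · intro s hs
    by_cases h : s ≤ 1/2
    · have hfun : (fun t => if s ≤ 1/2 then H1 (2*s) t else H2 (2*s - 1) t) = H1 (2*s) := by
        funext t; rw [if_pos h]
      show IsPosPathJ4 _ (fun t => if s ≤ 1/2 then H1 (2*s) t else H2 (2*s - 1) t)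
      rw [hfun]
      exact hp1 (2*s) ⟨by linarith [hs.1], by linarith⟩
    · have hfun : (fun t => if s ≤ 1/2 then H1 (2*s) t else H2 (2*s - 1) t) = H2 (2*s - 1) := by
        funext t; rw [if_neg h]
      show IsPosPathJ4 _ (fun t => if s ≤ 1/2 then H1 (2*s) t else H2 (2*s - 1) t)
      rw [hfun]
      exact hp2 (2*s - 1) ⟨by simp at h ⊢; linarith, by linarith [hs.2]⟩

lemma chain (n : ℤ) : ∀ a : ℤ, 1 ≤ a → a < n →
    PosHomotopicJ4 1 (Lp (a:ℝ) ((n - a : ℤ) : ℝ)) (Lp ((1:ℤ):ℝ) ((n - 1 : ℤ) : ℝ)) := by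
  intro a ha
  refine Int.le_induction (motive := fun a _ => a < n →
    PosHomotopicJ4 1 (Lp (a:ℝ) ((n - a : ℤ) : ℝ)) (Lp ((1:ℤ):ℝ) ((n - 1 : ℤ) : ℝ)))
    ?_ ?_ a ha
  · intro h
    exact posHomotopic_refl le_rfl (by omega)
  · intro a ha IH hlt
    have hb : 1 ≤ n - a - 1 := by omega
    have hmove := move a (n - a - 1) ha hb
    have e1 : (((a + 1 : ℤ)) : ℝ) = (a:ℝ) + 1 := by push_cast; ring
    have e2 : ((n - (a + 1) : ℤ) : ℝ) = ((n - a - 1 : ℤ) : ℝ) := by push_cast; ring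
    have e3 : ((n - a - 1 : ℤ) : ℝ) + 1 = ((n - a : ℤ) : ℝ) := by push_cast; ring
    have h1 : PosHomotopicJ4 1 (Lp (((a + 1 : ℤ)) : ℝ) ((n - (a + 1) : ℤ) : ℝ))
        (Lp (a:ℝ) ((n - a : ℤ) : ℝ)) := by
      rw [e1, e2, ← e3]
      exact hmove
    exact posHomotopic_trans h1 (IH (by omega))

lemma main_chain (k l n : ℤ) (hk : 1 ≤ k) (hl : 1 ≤ l) (hnk : k < n) (hnl : l < n) :
    PosHomotopicJ4 1 (Lp (k:ℝ) ((n - k : ℤ) : ℝ)) (Lp (l:ℝ) ((n - l : ℤ) : ℝ)) :=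
  posHomotopic_trans (chain n k hk hnk) (posHomotopic_symm (chain n l hl hnl))


lemma exp_eq_Rot (θ : ℝ) : NormedSpace.exp (θ • J2) = Rot θ := by
  rw [exp_theta_J2, smul_one_add_smul_J2]; rfl


end Aux

/-- For integers `k, ℓ ≥ 1` and `n ≥ 3` with `n > k`, `n > ℓ`, the loops
`t ↦ blockdiag(exp(ktJ), exp((n-k)tJ))` and `t ↦ blockdiag(exp(ℓtJ), exp((n-ℓ)tJ))`
are homotopic through positive loops in `Sp(4)` based at the identity. -/
theorem stmt13 (k ℓ n : ℤ) (hk : 1 ≤ k) (hl : 1 ≤ ℓ) (hn : 3 ≤ n)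
    (hnk : k < n) (hnl : ℓ < n) :
    PosHomotopicJ4 1
      (fun t => blockDiag2 (NormedSpace.exp (((k : ℝ) * t) • J2))
        (NormedSpace.exp ((((n : ℝ) - (k : ℝ)) * t) • J2)))
      (fun t => blockDiag2 (NormedSpace.exp (((ℓ : ℝ) * t) • J2))
        (NormedSpace.exp ((((n : ℝ) - (ℓ : ℝ)) * t) • J2))) := by
  have key := main_chain k ℓ n hk hl hnk hnl
  have hA : ∀ (m : ℤ) (hm : m < n), (fun t => blockDiag2 (NormedSpace.exp (((m : ℝ) * t) • J2))
      (NormedSpace.exp ((((n : ℝ) - (m : ℝ)) * t) • J2))) = Lp (m:ℝ) ((n - m : ℤ) : ℝ) := by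
    intro m _
    funext t
    rw [exp_eq_Rot, exp_eq_Rot]
    unfold blockDiag2 Lp
    congr 2
    push_cast
    ring
  exact posHomotopic_congr (hA k hnk).symm (hA ℓ hnl).symm key
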